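/- arXiv:1709.01826 — 14 statements merged into one kernel-verified Lean document; each statement's English description precedes it below -/
import Mathlib

section
/- Let (Q, →) be a finite transition system and R a preorder on Q. For all q, q' ∈ Q: there exists q'' with q → q'' and q' R q'' if and only if there exists q'' with q →_R q'' and q' R q''. Equivalently, →⁻¹ ∘ R = →_R⁻¹ ∘ R. -/
/-- A transition `q → q'` is `R`-maximal if `q → q'` and every successor `q''` of `q`
with `q' R q''` satisfies `q'' ∈ [q']_R`. -/
def MaxTr {Q : Type*} (tr R : Q → Q → Prop) (q q' : Q) : Prop :=
  tr q q' ∧ ∀ q'', tr q q'' → R q' q'' → (R q' q'' ∧ R q'' q')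

/-- Lemma 1, second part: `→⁻¹ ∘ R = →_R⁻¹ ∘ R`. -/
theorem pre_comp_eq_maxPre_comp {Q : Type*} [Fintype Q] (tr R : Q → Q → Prop)
    (hrefl : Reflexive R) (htrans : Transitive R) :
    ∀ q q', (∃ q'', tr q q'' ∧ R q' q'') ↔ (∃ q'', MaxTr tr R q q'' ∧ R q' q'') := by
  classical
  -- auxiliary: any nonempty finset has an R-maximal element
  have key : ∀ s : Finset Q, s.Nonempty → ∃ m ∈ s, ∀ x ∈ s, R m x → R x m := by
    intro s
    induction s using Finset.induction with
    | empty => intro h; exact absurd rfl h.ne_empty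
    | @insert a s ha ih =>
      intro _
      rcases s.eq_empty_or_nonempty with rfl | hs
      · exact ⟨a, Finset.mem_insert_self a _, by
          intro x hx hra
          rcases Finset.mem_insert.mp hx with rfl | hx
          · exact hra
          · exact absurd hx (Finset.notMem_empty x)⟩
      · obtain ⟨m, hm, hmax⟩ := ih hs
        by_cases hma : R m a ∧ ¬ R a m
        · refine ⟨a, Finset.mem_insert_self a _, ?_⟩
          intro x hx hax
          rcases Finset.mem_insert.mp hx with rfl | hx
          · exact hax
          · have hxm : R x m := hmax x hx (htrans hma.1 hax)
            exact htrans hxm hma.1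
        · refine ⟨m, Finset.mem_insert_of_mem hm, ?_⟩
          intro x hx hmx
          rcases Finset.mem_insert.mp hx with rfl | hx
          · by_contra h
            exact hma ⟨hmx, h⟩
          · exact hmax x hx hmx
  intro q q'
  constructor
  · rintro ⟨q'', htr, hR⟩
    set s : Finset Q := Finset.univ.filter (fun x => tr q x ∧ R q' x) with hs
    have hmem : q'' ∈ s := by simp [hs, htr, hR]
    obtain ⟨m, hm, hmax⟩ := key s ⟨q'', hmem⟩
    have hm' : tr q m ∧ R q' m := by simpa [hs] using hm
    refine ⟨m, ⟨hm'.1, ?_⟩, hm'.2⟩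
    intro x htrx hRx
    have hxs : x ∈ s := by simp [hs, htrx, htrans hm'.2 hRx]
    exact ⟨hRx, hmax x hxs hRx⟩
  · rintro ⟨q'', ⟨htr, _⟩, hR⟩
    exact ⟨q'', htr, hR⟩
end

section
/- Let (Q, →) be a finite transition system and R a preorder on Q. There exists a coarsest R-stable equivalence relation: an equivalence relation P included in R satisfying P ∘ →⁻¹ ⊆ →⁻¹ ∘ R (for all c, d, b with c P d and c → b there exists b' with d → b' and b R b'), such that every equivalence relation P' included in R satisfying P' ∘ →⁻¹ ⊆ →⁻¹ ∘ R is included in P. -/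
/-- Proposition 2: there is a coarsest `R`-stable equivalence relation. -/
theorem exists_coarsest_stable_equivalence {Q : Type*} [Fintype Q]
    (tr R : Q → Q → Prop) (hrefl : Reflexive R) (htrans : Transitive R) :
    ∃ P : Q → Q → Prop, Equivalence P ∧ (∀ a b, P a b → R a b) ∧
      (∀ c d b, P c d → tr c b → ∃ b', tr d b' ∧ R b b') ∧
      (∀ P' : Q → Q → Prop, Equivalence P' → (∀ a b, P' a b → R a b) →
        (∀ c d b, P' c d → tr c b → ∃ b', tr d b' ∧ R b b') →
        ∀ a b, P' a b → P a b) := by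
  set S : Q → Q → Prop := fun a b => ∃ P' : Q → Q → Prop, Equivalence P' ∧
      (∀ a b, P' a b → R a b) ∧
      (∀ c d b, P' c d → tr c b → ∃ b', tr d b' ∧ R b b') ∧ P' a b with hS
  refine ⟨Relation.EqvGen S, Relation.EqvGen.is_equivalence S, ?_, ?_, ?_⟩
  · -- inclusion in R, proved with symmetric motive
    have key : ∀ a b, Relation.EqvGen S a b → R a b ∧ R b a := by
      intro a b h
      induction h with
      | rel x y hxy =>
        obtain ⟨P', hequiv, hsub, _, hxy⟩ := hxy
        exact ⟨hsub _ _ hxy, hsub _ _ (hequiv.symm hxy)⟩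
      | refl x => exact ⟨hrefl x, hrefl x⟩
      | symm x y _ ih => exact ⟨ih.2, ih.1⟩
      | trans x y z _ _ ih1 ih2 =>
        exact ⟨htrans ih1.1 ih2.1, htrans ih2.2 ih1.2⟩
    exact fun a b h => (key a b h).1
  · -- stability, symmetric motive
    have key : ∀ c d, Relation.EqvGen S c d →
        (∀ b, tr c b → ∃ b', tr d b' ∧ R b b') ∧
        (∀ b, tr d b → ∃ b', tr c b' ∧ R b b') := by
      intro c d h
      induction h with
      | rel x y hxy =>
        obtain ⟨P', hequiv, _, hstab, hxy⟩ := hxy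
        exact ⟨fun b hb => hstab _ _ _ hxy hb,
               fun b hb => hstab _ _ _ (hequiv.symm hxy) hb⟩
      | refl x => exact ⟨fun b hb => ⟨b, hb, hrefl b⟩, fun b hb => ⟨b, hb, hrefl b⟩⟩
      | symm x y _ ih => exact ⟨ih.2, ih.1⟩
      | trans x y z _ _ ih1 ih2 =>
        refine ⟨fun b hb => ?_, fun b hb => ?_⟩
        · obtain ⟨b', hb', hR⟩ := ih1.1 b hb
          obtain ⟨b'', hb'', hR'⟩ := ih2.1 b' hb'
          exact ⟨b'', hb'', htrans hR hR'⟩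
        · obtain ⟨b', hb', hR⟩ := ih2.2 b hb
          obtain ⟨b'', hb'', hR'⟩ := ih1.2 b' hb'
          exact ⟨b'', hb'', htrans hR hR'⟩
    exact fun c d b h hb => (key c d h).1 b hb
  · intro P' hequiv hsub hstab a b hab
    exact Relation.EqvGen.rel a b ⟨P', hequiv, hsub, hstab, hab⟩
end

section
/- Let (Q, →) be a finite transition system, U a preorder on Q, R a U-stable preorder (so R ⊆ U), and P the coarsest R-stable equivalence relation included in R. Define NotRel = U \ R and let NotRel' be the relation containing (c', d') whenever there exist b, c, d with c → b, c R d, d ∈ →⁻¹ ∘ NotRel(b) (i.e. ∃ b', d → b' ∧ b U b' ∧ ¬(b R b')), d ∉ →⁻¹ ∘ R(b) (i.e. ¬∃ b'', d → b'' ∧ b R b''), c' ∈ [c]_P and d' ∈ [d]_P. Then NotRel' equals the relation X containing exactly the pairs (c, d) such that there exists b with c →_R b, c R d, d ∈ →_R⁻¹ ∘ NotRel(b) (i.e. ∃ b', d →_R b' ∧ b U b' ∧ ¬(b R b')), and d ∉ →_R⁻¹ ∘ R(b) (i.e. ¬∃ b'', d →_R b'' ∧ b R b''). -/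
/-- `NotRel' c' d'` holds when there are `b, c, d` with `c → b`, `c R d`,
`d ∈ →⁻¹ ∘ (U \ R)(b)`, `d ∉ →⁻¹ ∘ R(b)`, `c' ∈ [c]_P` and `d' ∈ [d]_P`. -/
def NotRel' {Q : Type*} (tr U R P : Q → Q → Prop) (c' d' : Q) : Prop :=
  ∃ b c d, tr c b ∧ R c d ∧
    (∃ b', tr d b' ∧ U b b' ∧ ¬ R b b') ∧
    ¬(∃ b'', tr d b'' ∧ R b b'') ∧
    P c c' ∧ P d d'

lemma exists_maxTr {Q : Type*} [Fintype Q] (tr R : Q → Q → Prop)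
    (hRrefl : Reflexive R) (hRtrans : Transitive R)
    {q b : Q} (h : tr q b) : ∃ m, MaxTr tr R q m ∧ R b m := by
  have hwf : WellFounded (fun x y : Q => R y x ∧ ¬ R x y) := by
    have : IsTrans Q (fun x y : Q => R y x ∧ ¬ R x y) :=
      ⟨fun a b c hab hbc => ⟨hRtrans hbc.1 hab.1, fun h => hab.2 (hRtrans h hbc.1)⟩⟩
    have : IsIrrefl Q (fun x y : Q => R y x ∧ ¬ R x y) := ⟨fun a h => h.2 h.1⟩
    exact Finite.wellFounded_of_trans_of_irrefl _
  obtain ⟨m, hm, hmin⟩ := hwf.has_min {x | tr q x ∧ R b x} ⟨b, h, hRrefl b⟩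
  refine ⟨m, ⟨hm.1, fun q'' htr hR => ⟨hR, ?_⟩⟩, hm.2⟩
  by_contra hnot
  exact hmin q'' ⟨htr, hRtrans hm.2 hR⟩ ⟨hR, hnot⟩

/-- Theorem 1, item 1: `NotRel'` coincides with the relation `X` defined via
`R`-maximal transitions. -/
theorem notRel'_eq_X {Q : Type*} [Fintype Q] (tr U R P : Q → Q → Prop)
    (hUrefl : Reflexive U) (hUtrans : Transitive U)
    (hRrefl : Reflexive R) (hRtrans : Transitive R)
    (hRU : ∀ a b, R a b → U a b)
    (hUstable : ∀ c d b, R c d → tr c b → ∃ b', tr d b' ∧ U b b')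
    (hPeq : Equivalence P) (hPR : ∀ a b, P a b → R a b)
    (hPstable : ∀ c d b, P c d → tr c b → ∃ b', tr d b' ∧ R b b')
    (hPcoarsest : ∀ P' : Q → Q → Prop, Equivalence P' → (∀ a b, P' a b → R a b) →
      (∀ c d b, P' c d → tr c b → ∃ b', tr d b' ∧ R b b') →
      ∀ a b, P' a b → P a b) :
    ∀ c d, NotRel' tr U R P c d ↔
      (∃ b, MaxTr tr R c b ∧ R c d ∧
        (∃ b', MaxTr tr R d b' ∧ U b b' ∧ ¬ R b b') ∧
        ¬(∃ b'', MaxTr tr R d b'' ∧ R b b'')) := by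
  intro c' d'
  constructor
  · rintro ⟨b, c, d, hcb, hcd, ⟨b', hdb', hUbb', hnRbb'⟩, hno, hPcc', hPdd'⟩
    have hRc'd' : R c' d' :=
      hRtrans (hPR _ _ (hPeq.symm hPcc')) (hRtrans hcd (hPR _ _ hPdd'))
    have hno' : ∀ b'', tr d' b'' → ¬ R b b'' := by
      intro b'' htr hR
      obtain ⟨b₂, htr2, hR2⟩ := hPstable d' d b'' (hPeq.symm hPdd') htr
      exact hno ⟨b₂, htr2, hRtrans hR hR2⟩
    obtain ⟨b₁, htrc'b₁, hRbb₁⟩ := hPstable c c' b hPcc' hcb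
    obtain ⟨bm, hMax, hRb₁bm⟩ := exists_maxTr tr R hRrefl hRtrans htrc'b₁
    have hRbbm : R b bm := hRtrans hRbb₁ hRb₁bm
    refine ⟨bm, hMax, hRc'd', ?_, ?_⟩
    · obtain ⟨b₂, htrd'b₂, hUbmb₂⟩ := hUstable c' d' bm hRc'd' hMax.1
      obtain ⟨bm', hMax', hRb₂bm'⟩ := exists_maxTr tr R hRrefl hRtrans htrd'b₂
      refine ⟨bm', hMax', hUtrans hUbmb₂ (hRU _ _ hRb₂bm'), fun hR => ?_⟩
      exact hno' bm' hMax'.1 (hRtrans hRbbm hR)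
    · rintro ⟨b'', hMax'', hR''⟩
      exact hno' b'' hMax''.1 (hRtrans hRbbm hR'')
  · rintro ⟨b, hMaxcb, hcd, ⟨b', hMax', hU, hnR⟩, hno⟩
    refine ⟨b, c', d', hMaxcb.1, hcd, ⟨b', hMax'.1, hU, hnR⟩, ?_, hPeq.refl c', hPeq.refl d'⟩
    rintro ⟨b'', htr, hR⟩
    obtain ⟨m, hM, hRm⟩ := exists_maxTr tr R hRrefl hRtrans htr
    exact hno ⟨m, hM, hRtrans hR hRm⟩
end

section
/- Let (Q, →) be a finite transition system, U a preorder on Q, R a U-stable preorder (so R ⊆ U), and P the coarsest R-stable equivalence relation included in R. Define NotRel = U \ R, NotRel' as the relation containing (c', d') whenever there exist b, c, d with c → b, c R d, (∃ b', d → b' ∧ b U b' ∧ ¬(b R b')), ¬(∃ b'', d → b'' ∧ b R b''), c' ∈ [c]_P and d' ∈ [d]_P, and set V = R \ NotRel'. Then any simulation S included in R is also included in V. -/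
/-- Theorem 1, item 2: any simulation included in `R` is included in `V = R \ NotRel'`. -/
theorem simulation_subset_V {Q : Type*} [Fintype Q] (tr U R P : Q → Q → Prop)
    (hUrefl : Reflexive U) (hUtrans : Transitive U)
    (hRrefl : Reflexive R) (hRtrans : Transitive R)
    (hRU : ∀ a b, R a b → U a b)
    (hUstable : ∀ c d b, R c d → tr c b → ∃ b', tr d b' ∧ U b b')
    (hPeq : Equivalence P) (hPR : ∀ a b, P a b → R a b)
    (hPstable : ∀ c d b, P c d → tr c b → ∃ b', tr d b' ∧ R b b')
    (hPcoarsest : ∀ P' : Q → Q → Prop, Equivalence P' → (∀ a b, P' a b → R a b) →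
      (∀ c d b, P' c d → tr c b → ∃ b', tr d b' ∧ R b b') →
      ∀ a b, P' a b → P a b)
    (S : Q → Q → Prop)
    (hSsim : ∀ c d b, S c d → tr c b → ∃ b', tr d b' ∧ S b b')
    (hSR : ∀ a b, S a b → R a b) :
    ∀ a b, S a b → (R a b ∧ ¬ NotRel' tr U R P a b) := by
  intro a b hS
  refine ⟨hSR a b hS, ?_⟩
  rintro ⟨b0, c, d, htcb, hRcd, -, hno, hPca, hPdb⟩
  obtain ⟨b1, htab1, hRb01⟩ := hPstable c a b0 hPca htcb
  obtain ⟨b2, htbb2, hSb12⟩ := hSsim a b b1 hS htab1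
  obtain ⟨b3, htdb3, hRb23⟩ := hPstable b d b2 (hPeq.symm hPdb) htbb2
  exact hno ⟨b3, htdb3, hRtrans (hRtrans hRb01 (hSR _ _ hSb12)) hRb23⟩
end

section
/- Let (Q, →) be a finite transition system, U a preorder on Q, R a U-stable preorder (so R ⊆ U), and P the coarsest R-stable equivalence relation included in R. Define NotRel = U \ R, NotRel' as the relation containing (c', d') whenever there exist b, c, d with c → b, c R d, (∃ b', d → b' ∧ b U b' ∧ ¬(b R b')), ¬(∃ b'', d → b'' ∧ b R b''), c' ∈ [c]_P and d' ∈ [d]_P, and set V = R \ NotRel'. Then V ∘ →⁻¹ ⊆ →⁻¹ ∘ R: for all c, d, b with c V d and c → b there exists b' with d → b' and b R b'. -/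
/-- Theorem 1, item 3: `V ∘ →⁻¹ ⊆ →⁻¹ ∘ R` where `V = R \ NotRel'`. -/
theorem V_stable_wrt_R {Q : Type*} [Fintype Q] (tr U R P : Q → Q → Prop)
    (hUrefl : Reflexive U) (hUtrans : Transitive U)
    (hRrefl : Reflexive R) (hRtrans : Transitive R)
    (hRU : ∀ a b, R a b → U a b)
    (hUstable : ∀ c d b, R c d → tr c b → ∃ b', tr d b' ∧ U b b')
    (hPeq : Equivalence P) (hPR : ∀ a b, P a b → R a b)
    (hPstable : ∀ c d b, P c d → tr c b → ∃ b', tr d b' ∧ R b b')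
    (hPcoarsest : ∀ P' : Q → Q → Prop, Equivalence P' → (∀ a b, P' a b → R a b) →
      (∀ c d b, P' c d → tr c b → ∃ b', tr d b' ∧ R b b') →
      ∀ a b, P' a b → P a b) :
    ∀ c d b, (R c d ∧ ¬ NotRel' tr U R P c d) → tr c b →
      ∃ b', tr d b' ∧ R b b' := by
  rintro c d b ⟨hRcd, hNot⟩ htr
  by_contra h
  exact hNot ⟨b, c, d, htr, hRcd,
    (hUstable c d b hRcd htr).imp (fun b' ⟨h1, h2⟩ =>
      ⟨h1, h2, fun hr => h ⟨b', h1, hr⟩⟩),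
    h, hPeq.refl c, hPeq.refl d⟩
end

section
/- Let (Q, →) be a finite transition system, U a preorder on Q, R a U-stable preorder (so R ⊆ U), and P the coarsest R-stable equivalence relation included in R. Define NotRel = U \ R, NotRel' as the relation containing (c', d') whenever there exist b, c, d with c → b, c R d, (∃ b', d → b' ∧ b U b' ∧ ¬(b R b')), ¬(∃ b'', d → b'' ∧ b R b''), c' ∈ [c]_P and d' ∈ [d]_P, and set V = R \ NotRel'. Then V is a preorder (reflexive and transitive). -/
/-- Theorem 1, item 4: `V = R \ NotRel'` is a preorder. -/
theorem V_is_preorder {Q : Type*} [Fintype Q] (tr U R P : Q → Q → Prop)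
    (hUrefl : Reflexive U) (hUtrans : Transitive U)
    (hRrefl : Reflexive R) (hRtrans : Transitive R)
    (hRU : ∀ a b, R a b → U a b)
    (hUstable : ∀ c d b, R c d → tr c b → ∃ b', tr d b' ∧ U b b')
    (hPeq : Equivalence P) (hPR : ∀ a b, P a b → R a b)
    (hPstable : ∀ c d b, P c d → tr c b → ∃ b', tr d b' ∧ R b b')
    (hPcoarsest : ∀ P' : Q → Q → Prop, Equivalence P' → (∀ a b, P' a b → R a b) →
      (∀ c d b, P' c d → tr c b → ∃ b', tr d b' ∧ R b b') →
      ∀ a b, P' a b → P a b) :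
    Reflexive (fun c d => R c d ∧ ¬ NotRel' tr U R P c d) ∧
    Transitive (fun c d => R c d ∧ ¬ NotRel' tr U R P c d) := by
  constructor
  · intro x
    refine ⟨hRrefl x, ?_⟩
    rintro ⟨b₀, c₀, d₀, htr, hR, ⟨b', htr', hU', hnR'⟩, hno, hPc, hPd⟩
    -- P c₀ d₀ since P c₀ x and P d₀ x
    have hPcd : P c₀ d₀ := hPeq.trans hPc (hPeq.symm hPd)
    obtain ⟨b'', htr'', hR''⟩ := hPstable c₀ d₀ b₀ hPcd htr
    exact hno ⟨b'', htr'', hR''⟩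
  · rintro a b c ⟨hRab, hNab⟩ ⟨hRbc, hNbc⟩
    refine ⟨hRtrans hRab hRbc, ?_⟩
    rintro ⟨b₀, c₀, d₀, htr, hR, ⟨b', htr', hU', hnR'⟩, hno, hPc, hPd⟩
    -- R c₀ b
    have hRc0b : R c₀ b := hRtrans (hPR _ _ hPc) hRab
    by_cases hcase : ∃ b₁, tr b b₁ ∧ R b₀ b₁
    · -- then NotRel' b c
      obtain ⟨b₁, htrb₁, hRb₀b₁⟩ := hcase
      have hRbd₀ : R b d₀ := hRtrans hRbc (hPR _ _ (hPeq.symm hPd))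
      obtain ⟨b₂, htrb₂, hUb₁b₂⟩ := hUstable b d₀ b₁ hRbd₀ htrb₁
      refine hNbc ⟨b₁, b, d₀, htrb₁, hRbd₀, ⟨b₂, htrb₂, hUb₁b₂, ?_⟩, ?_, hPeq.refl b, hPd⟩
      · intro hRb₁b₂
        exact hno ⟨b₂, htrb₂, hRtrans hRb₀b₁ hRb₁b₂⟩
      · rintro ⟨b₃, htrb₃, hRb₁b₃⟩
        exact hno ⟨b₃, htrb₃, hRtrans hRb₀b₁ hRb₁b₃⟩
    · -- then NotRel' a b
      obtain ⟨b₁, htrb₁, hUb₀b₁⟩ := hUstable c₀ b b₀ hRc0b htr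
      exact hNab ⟨b₀, c₀, b, htr, hRc0b, ⟨b₁, htrb₁, hUb₀b₁,
        fun h => hcase ⟨b₁, htrb₁, h⟩⟩, hcase, hPc, hPeq.refl b⟩
end

section
/- Let (Q, →) be a finite transition system, U a preorder on Q, R a U-stable preorder (so R ⊆ U), and P the coarsest R-stable equivalence relation included in R. Define NotRel = U \ R, NotRel' as the relation containing (c', d') whenever there exist b, c, d with c → b, c R d, (∃ b', d → b' ∧ b U b' ∧ ¬(b R b')), ¬(∃ b'', d → b'' ∧ b R b''), c' ∈ [c]_P and d' ∈ [d]_P, and set V = R \ NotRel'. Then the blocks of V are exactly the blocks of P: for all q, q' ∈ Q, (q V q' ∧ q' V q) if and only if q P q'. -/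
/-- Theorem 1, item 6: the blocks of `V = R \ NotRel'` are exactly the blocks of `P`. -/
theorem V_blocks_eq_P_blocks {Q : Type*} [Fintype Q] (tr U R P : Q → Q → Prop)
    (hUrefl : Reflexive U) (hUtrans : Transitive U)
    (hRrefl : Reflexive R) (hRtrans : Transitive R)
    (hRU : ∀ a b, R a b → U a b)
    (hUstable : ∀ c d b, R c d → tr c b → ∃ b', tr d b' ∧ U b b')
    (hPeq : Equivalence P) (hPR : ∀ a b, P a b → R a b)
    (hPstable : ∀ c d b, P c d → tr c b → ∃ b', tr d b' ∧ R b b')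
    (hPcoarsest : ∀ P' : Q → Q → Prop, Equivalence P' → (∀ a b, P' a b → R a b) →
      (∀ c d b, P' c d → tr c b → ∃ b', tr d b' ∧ R b b') →
      ∀ a b, P' a b → P a b) :
    ∀ q q', ((R q q' ∧ ¬ NotRel' tr U R P q q') ∧ (R q' q ∧ ¬ NotRel' tr U R P q' q)) ↔
      P q q' := by
  -- P-related states are never NotRel'-related
  have hPnot : ∀ a b, P a b → ¬ NotRel' tr U R P a b := by
    rintro a b hab ⟨b0, c0, d0, htr, hR, _, hno, hc0a, hd0b⟩
    have hc0d0 : P c0 d0 := hPeq.trans hc0a (hPeq.trans hab (hPeq.symm hd0b))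
    obtain ⟨b'', h1, h2⟩ := hPstable c0 d0 b0 hc0d0 htr
    exact hno ⟨b'', h1, h2⟩
  set W : Q → Q → Prop := fun a b =>
    (R a b ∧ ¬ NotRel' tr U R P a b) ∧ (R b a ∧ ¬ NotRel' tr U R P b a) with hW
  have hWstable : ∀ c d b, W c d → tr c b → ∃ b', tr d b' ∧ R b b' := by
    rintro c d b ⟨⟨hRcd, hncd⟩, -⟩ htr
    by_contra hno
    push_neg at hno
    obtain ⟨b', htr', hU⟩ := hUstable c d b hRcd htr
    exact hncd ⟨b, c, d, htr, hRcd, ⟨b', htr', hU, hno b' htr'⟩,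
      fun ⟨b'', h1, h2⟩ => hno b'' h1 h2, hPeq.refl c, hPeq.refl d⟩
  have hP'R : ∀ a b, Relation.TransGen W a b → R a b := by
    intro a b h
    induction h with
    | single h => exact h.1.1
    | tail _ h ih => exact hRtrans ih h.1.1
  have hP'stable : ∀ c d b, Relation.TransGen W c d → tr c b → ∃ b', tr d b' ∧ R b b' := by
    intro c d b h
    induction h generalizing b with
    | single h => exact fun htr => hWstable _ _ _ h htr
    | tail _ h ih =>
      intro htr
      obtain ⟨b1, h1, h2⟩ := ih b htr
      obtain ⟨b2, h3, h4⟩ := hWstable _ _ _ h h1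
      exact ⟨b2, h3, hRtrans h2 h4⟩
  have hWrefl : ∀ a, W a a := fun a =>
    ⟨⟨hRrefl a, hPnot a a (hPeq.refl a)⟩, ⟨hRrefl a, hPnot a a (hPeq.refl a)⟩⟩
  have hP'eq : Equivalence (Relation.TransGen W) := by
    constructor
    · intro a; exact Relation.TransGen.single (hWrefl a)
    · intro a b h
      induction h with
      | single h => exact Relation.TransGen.single ⟨h.2, h.1⟩
      | tail _ h ih => exact Relation.TransGen.head ⟨h.2, h.1⟩ ih
    · intro a b c h1 h2; exact h1.trans h2
  have key := hPcoarsest (Relation.TransGen W) hP'eq hP'R hP'stable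
  intro q q'
  constructor
  · intro h
    exact key q q' (Relation.TransGen.single h)
  · intro h
    exact ⟨⟨hPR q q' h, hPnot q q' h⟩, ⟨hPR q' q (hPeq.symm h), hPnot q' q (hPeq.symm h)⟩⟩
end

section
/- Let (Q, →) be a transition system, R a preorder on Q, P an equivalence relation included in R, and rep a representative map for P. Let e, b ∈ Q with e → b and suppose ¬(∃ b', b R b' ∧ rep(e) → b') (so the transition from the block of e to the block of b is a splitter transition of type 1). Let M = {d ∈ Q | ∃ b', b R b' ∧ d → b'} and let P' = Split(P, M). Then P' is strictly included in P (P' ⊆ P and P' ≠ P), and every R-block-stable equivalence relation P'' included in P is included in P'. -/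
/-- Lemma 3: splitting with a splitter transition of type 1 strictly refines `P`, and
every `R`-block-stable equivalence relation included in `P` is included in the result. -/
theorem split1_correct {Q : Type*} (tr R P : Q → Q → Prop)
    (hRrefl : Reflexive R) (hRtrans : Transitive R)
    (hPeq : Equivalence P) (hPR : ∀ a b, P a b → R a b)
    (rep : Q → Q) (hrep1 : ∀ q, P q (rep q)) (hrep2 : ∀ q q', P q q' → rep q = rep q')
    (e b : Q) (heb : tr e b)
    (hsplitter : ¬ ∃ b', R b b' ∧ tr (rep e) b') :
    let M : Set Q := {d | ∃ b', R b b' ∧ tr d b'}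
    let P' : Q → Q → Prop := fun q q' => P q q' ∧ (q ∈ M ↔ q' ∈ M)
    ((∀ a c, P' a c → P a c) ∧ P' ≠ P) ∧
    (∀ P'' : Q → Q → Prop, Equivalence P'' → (∀ a c, P'' a c → P a c) →
      (∀ x d d', P'' d d' → ((∃ b', R x b' ∧ tr d b') ↔ (∃ b', R x b' ∧ tr d' b'))) →
      ∀ a c, P'' a c → P' a c) := by
  intro M P'
  have heM : e ∈ M := ⟨b, hRrefl b, heb⟩
  have hreM : rep e ∉ M := hsplitter
  refine ⟨⟨fun a c h => h.1, ?_⟩, ?_⟩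
  · intro h
    have : P' e (rep e) := h ▸ hrep1 e
    exact hreM (this.2.mp heM)
  · intro P'' hEq hsub hstable a c h
    exact ⟨hsub a c h, hstable b a c h⟩
end

section
/- Let (Q, →) be a finite transition system, R a preorder on Q, P an equivalence relation included in R, and rep a representative map for P. Assume there is no splitter transition of type 1: for all e, b with e → b there exists b' with b R b' and rep(e) → b'. Then for all e, b with e → b there exists b' with b R b' and rep(e) →_R b' (the transition rep(e) → b' is R-maximal). -/
private lemma exists_preorder_maximal {Q : Type*} [DecidableEq Q] (R : Q → Q → Prop)
    [DecidablePred fun p : Q × Q => R p.1 p.2]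
    (hRrefl : Reflexive R) (hRtrans : Transitive R) :
    ∀ (S : Finset Q), S.Nonempty → ∃ m ∈ S, ∀ q ∈ S, R m q → R q m := by
  intro S
  induction S using Finset.strongInduction with
  | _ S ih =>
    intro ⟨a, ha⟩
    classical
    set S' := S.filter (fun q => R a q ∧ ¬ R q a) with hS'
    by_cases h : S'.Nonempty
    · have hsub : S' ⊂ S := by
        refine Finset.ssubset_iff_of_subset (Finset.filter_subset _ _) |>.mpr ?_
        exact ⟨a, ha, by simp [hS', hRrefl a]⟩
      obtain ⟨m, hmS', hm⟩ := ih S' hsub h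
      have hmS : m ∈ S := (Finset.filter_subset _ _) hmS'
      obtain ⟨hma, hnma⟩ : R a m ∧ ¬ R m a := by
        exact (by simpa [hS'] using hmS' : _ ∧ _).2
      refine ⟨m, hmS, fun q hq hmq => ?_⟩
      by_cases hqa : R q a
      · exact absurd (hRtrans hmq hqa) hnma
      · exact hm q (by simp [hS', hq, hRtrans hma hmq, hqa]) hmq
    · refine ⟨a, ha, fun q hq haq => ?_⟩
      by_contra hqa
      exact h ⟨q, by simp [hS', hq, haq, hqa]⟩

/-- Lemma 4: in absence of splitter transitions of type 1, `E → B` implies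
`E.Rep ∈ →_R⁻¹ ∘ R (B)`. -/
theorem rep_reaches_via_maximal {Q : Type*} [Fintype Q] (tr R P : Q → Q → Prop)
    (hRrefl : Reflexive R) (hRtrans : Transitive R)
    (hPeq : Equivalence P) (hPR : ∀ a b, P a b → R a b)
    (rep : Q → Q) (hrep1 : ∀ q, P q (rep q)) (hrep2 : ∀ q q', P q q' → rep q = rep q')
    (hNoSplit1 : ∀ e b, tr e b → ∃ b', R b b' ∧ tr (rep e) b') :
    ∀ e b, tr e b → ∃ b', R b b' ∧ MaxTr tr R (rep e) b' := by
  classical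
  intro e b htr
  obtain ⟨b0, hb0, htr0⟩ := hNoSplit1 e b htr
  set S : Finset Q := Finset.univ.filter (fun q => tr (rep e) q ∧ R b0 q) with hS
  have hb0S : b0 ∈ S := by simp [hS, htr0, hRrefl b0]
  obtain ⟨m, hmS, hm⟩ := exists_preorder_maximal R hRrefl hRtrans S ⟨b0, hb0S⟩
  obtain ⟨htm, hb0m⟩ : tr (rep e) m ∧ R b0 m := by simpa [hS] using hmS
  refine ⟨m, hRtrans hb0 hb0m, htm, fun q'' htq hmq => ?_⟩
  exact ⟨hmq, hm q'' (by simp [hS, htq, hRtrans hb0m hmq]) hmq⟩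
end

section
/- Let (Q, →) be a finite transition system, R a preorder on Q, and P an equivalence relation included in R. Then P is R-block-stable if and only if P ∘ →_R⁻¹ ⊆ →⁻¹ ∘ [·]_R, i.e. for all c, c', d: if c →_R c' and c P d, then there exists d' with d → d' and d' ∈ [c']_R. -/
open Classical in
/-- In a finite type with a preorder `R`, above any element of `S` there is an
`R`-maximal element of `S`. -/
lemma exists_max_aux {Q : Type*} [Fintype Q] (R : Q → Q → Prop)
    (hrefl : Reflexive R) (htrans : Transitive R) (S : Q → Prop) :
    ∀ n x, S x → (Finset.univ.filter (fun z => S z ∧ R x z ∧ ¬ R z x)).card ≤ n →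
      ∃ m, S m ∧ R x m ∧ ∀ z, S z → R m z → R z m := by
  intro n
  induction n with
  | zero =>
    intro x hx hcard
    refine ⟨x, hx, hrefl x, fun z hz hxz => ?_⟩
    by_contra hzx
    have : z ∈ Finset.univ.filter (fun z => S z ∧ R x z ∧ ¬ R z x) := by
      simp [hz, hxz, hzx]
    have := Finset.card_pos.mpr ⟨z, this⟩
    omega
  | succ n ih =>
    intro x hx hcard
    by_cases hmax : ∀ z, S z → R x z → R z x
    · exact ⟨x, hx, hrefl x, hmax⟩
    · push_neg at hmax
      obtain ⟨y, hy, hxy, hyx⟩ := hmax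
      have hsub : Finset.univ.filter (fun z => S z ∧ R y z ∧ ¬ R z y) ⊆
          (Finset.univ.filter (fun z => S z ∧ R x z ∧ ¬ R z x)).erase y := by
        intro z hz
        simp only [Finset.mem_filter, Finset.mem_univ, true_and] at hz
        obtain ⟨hzS, hyz, hzy⟩ := hz
        refine Finset.mem_erase.mpr ⟨?_, ?_⟩
        · rintro rfl; exact hzy (hrefl z)
        · simp only [Finset.mem_filter, Finset.mem_univ, true_and]
          exact ⟨hzS, htrans hxy hyz, fun hzx => hzy (htrans hzx hxy)⟩
      have hymem : y ∈ Finset.univ.filter (fun z => S z ∧ R x z ∧ ¬ R z x) := by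
        simp [hy, hxy, hyx]
      have hlt : (Finset.univ.filter (fun z => S z ∧ R y z ∧ ¬ R z y)).card ≤ n := by
        have h1 := Finset.card_le_card hsub
        have h2 := Finset.card_erase_of_mem hymem
        have h3 := Finset.card_pos.mpr ⟨y, hymem⟩
        omega
      obtain ⟨m, hmS, hym, hm⟩ := ih y hy hlt
      exact ⟨m, hmS, htrans hxy hym, hm⟩

/-- Above any element of `S` there is an `R`-maximal element of `S`. -/
lemma exists_max {Q : Type*} [Fintype Q] (R : Q → Q → Prop)
    (hrefl : Reflexive R) (htrans : Transitive R) (S : Q → Prop) (x : Q) (hx : S x) :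
    ∃ m, S m ∧ R x m ∧ ∀ z, S z → R m z → R z m := by
  classical
  exact exists_max_aux R hrefl htrans S _ x hx le_rfl

/-- Lemma 5: `P` is `R`-block-stable iff `P ∘ →_R⁻¹ ⊆ →⁻¹ ∘ [·]_R`. -/
theorem blockStable_iff_maximal_stable {Q : Type*} [Fintype Q] (tr R P : Q → Q → Prop)
    (hRrefl : Reflexive R) (hRtrans : Transitive R)
    (hPeq : Equivalence P) (hPR : ∀ a b, P a b → R a b) :
    (∀ b d d', P d d' → ((∃ b', R b b' ∧ tr d b') ↔ (∃ b', R b b' ∧ tr d' b'))) ↔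
    (∀ c c' d, MaxTr tr R c c' → P c d → ∃ d', tr d d' ∧ (R c' d' ∧ R d' c')) := by
  constructor
  · intro hstab c c' d hmax hcd
    obtain ⟨hcc', hmaxc⟩ := hmax
    -- d has some successor above c'
    have hd : ∃ b', R c' b' ∧ tr d b' :=
      (hstab c' c d hcd).mp ⟨c', hRrefl c', hcc'⟩
    obtain ⟨b', hc'b', hdb'⟩ := hd
    -- pick a maximal successor x of d above b'
    obtain ⟨x, hdx, hb'x, hxmax⟩ := exists_max R hRrefl hRtrans (fun z => tr d z) b' hdb'
    have hc'x : R c' x := hRtrans hc'b' hb'x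
    -- by stability back, c has a successor y with R x y
    have hc : ∃ y, R x y ∧ tr c y :=
      (hstab x d c (hPeq.symm hcd)).mp ⟨x, hRrefl x, hdx⟩
    obtain ⟨y, hxy, hcy⟩ := hc
    have hc'y : R c' y := hRtrans hc'x hxy
    have hyc' : R y c' := (hmaxc y hcy hc'y).2
    exact ⟨x, hdx, hc'x, hRtrans hxy hyc'⟩
  · intro h b d d' hdd'
    have key : ∀ d d', P d d' → (∃ b', R b b' ∧ tr d b') → (∃ b', R b b' ∧ tr d' b') := by
      intro d d' hdd' ⟨b', hbb', hdb'⟩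
      obtain ⟨x, hdx, hb'x, hxmax⟩ := exists_max R hRrefl hRtrans (fun z => tr d z) b' hdb'
      have hmax : MaxTr tr R d x :=
        ⟨hdx, fun q'' hq'' hxq'' => ⟨hxq'', hxmax q'' hq'' hxq''⟩⟩
      obtain ⟨d'', hd'd'', hxd'', _⟩ := h d x d' hmax hdd'
      exact ⟨d'', hRtrans hbb' (hRtrans hb'x hxd''), hd'd''⟩
    exact ⟨key d d' hdd', key d' d (hPeq.symm hdd')⟩
end

section
/- Let (Q, →) be a finite transition system, R a preorder on Q, P an equivalence relation included in R, and rep a representative map for P. Assume there is no splitter transition of type 1: for all e', b'' with e' → b'' there exists b₂ with b'' R b₂ and rep(e') → b₂. Let e, b ∈ Q and assume the transition from the block of e to B = [b]_R is a splitter transition of type 2: (a) there exists b' ∈ [b]_R with rep(e) → b'; (b) for every q', if rep(e) → q' and b R q' then q' ∈ [b]_R; (c) there exists e'' with e'' P e and no transition from e'' into [b]_R (¬∃ b', b' ∈ [b]_R ∧ e'' → b'). Let M = {q ∈ Q | q P e ∧ ∃ b', b' ∈ [b]_R ∧ q → b'} and P' = Split(P, M). Then P' is strictly included in P (P' ⊆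 P and P' ≠ P), and every R-block-stable equivalence relation P'' included in P is included in P'. -/
/-- Lemma 6: splitting with a splitter transition of type 2 (in absence of splitter
transitions of type 1) strictly refines `P`, and every `R`-block-stable equivalence
relation included in `P` is included in the result. -/
theorem split2_correct {Q : Type*} [Fintype Q] (tr R P : Q → Q → Prop)
    (hRrefl : Reflexive R) (hRtrans : Transitive R)
    (hPeq : Equivalence P) (hPR : ∀ a b, P a b → R a b)
    (rep : Q → Q) (hrep1 : ∀ q, P q (rep q)) (hrep2 : ∀ q q', P q q' → rep q = rep q')
    (hNoSplit1 : ∀ e' b'', tr e' b'' → ∃ b₂, R b'' b₂ ∧ tr (rep e') b₂)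
    (e b : Q)
    (ha : ∃ b', (R b b' ∧ R b' b) ∧ tr (rep e) b')
    (hb : ∀ q', tr (rep e) q' → R b q' → (R b q' ∧ R q' b))
    (hc : ∃ e'', P e'' e ∧ ¬ ∃ b', (R b b' ∧ R b' b) ∧ tr e'' b') :
    let M : Set Q := {q | P q e ∧ ∃ b', (R b b' ∧ R b' b) ∧ tr q b'}
    let P' : Q → Q → Prop := fun q q' => P q q' ∧ (q ∈ M ↔ q' ∈ M)
    ((∀ a c, P' a c → P a c) ∧ P' ≠ P) ∧
    (∀ P'' : Q → Q → Prop, Equivalence P'' → (∀ a c, P'' a c → P a c) →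
      (∀ x d d', P'' d d' → ((∃ b', R x b' ∧ tr d b') ↔ (∃ b', R x b' ∧ tr d' b'))) →
      ∀ a c, P'' a c → P' a c) := by

  intro M P'
  obtain ⟨b', ⟨hbb', hb'b⟩, htrb'⟩ := ha
  obtain ⟨e'', hPe''e, hnotr⟩ := hc
  have hrepM : rep e ∈ M := ⟨hPeq.symm (hrep1 e), b', ⟨hbb', hb'b⟩, htrb'⟩
  have he''M : e'' ∉ M := fun h => hnotr h.2
  constructor
  · refine ⟨fun a c h => h.1, ?_⟩
    intro hEq
    have : P' (rep e) e'' := by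
      rw [hEq]
      exact hPeq.trans (hPeq.symm (hrep1 e)) (hPeq.symm hPe''e)
    exact he''M (this.2.mp hrepM)
  · intro P'' hP''eq hP''P hstab a c hac
    have key : ∀ x y, P'' x y → x ∈ M → y ∈ M := by
      intro x y hxy ⟨hPxe, b₁, ⟨hbb₁, hb₁b⟩, htr⟩
      have hPye : P y e := hPeq.trans (hPeq.symm (hP''P x y hxy)) hPxe
      obtain ⟨b₂, hRbb₂, htry⟩ := (hstab b x y hxy).mp ⟨b₁, hbb₁, htr⟩
      obtain ⟨b₃, hRb₂b₃, htrrep⟩ := hNoSplit1 y b₂ htry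
      rw [hrep2 y e hPye] at htrrep
      have hb₃ := hb b₃ htrrep (hRtrans hRbb₂ hRb₂b₃)
      exact ⟨hPye, b₂, ⟨hRbb₂, hRtrans hRb₂b₃ hb₃.2⟩, htry⟩
    exact ⟨hP''P a c hac, ⟨key a c hac, key c a (hP''eq.symm hac)⟩⟩
end

section
/- Let (Q, →) be a finite transition system, R a preorder on Q, P an equivalence relation included in R, and rep a representative map for P. Assume there is no splitter transition of type 1: for all e, b with e → b there exists b' with b R b' and rep(e) → b'. Assume there is no splitter transition of type 2: for all e, b, if there exists b' ∈ [b]_R with rep(e) → b' and for every q' with rep(e) → q' and b R q' one has q' ∈ [b]_R, then every e'' with e'' P e has a transition into [b]_R (∃ b'', b'' ∈ [b]_R ∧ e'' → b''). Then P is R-block-stable. -/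
open Classical in
lemma exists_R_maximal {Q : Type*} (R : Q → Q → Prop) (hT : Transitive R)
    (s : Finset Q) (hs : s.Nonempty) : ∃ w ∈ s, ∀ q ∈ s, R w q → R q w := by
  classical
  induction s using Finset.strongInduction with
  | _ s ih =>
    obtain ⟨x, hx⟩ := hs
    by_cases hmax : ∀ q ∈ s, R x q → R q x
    · exact ⟨x, hx, hmax⟩
    · push_neg at hmax
      obtain ⟨q, hq, hxq, hqx⟩ := hmax
      set t := s.filter (fun y => R x y ∧ ¬ R y x) with ht
      have htsub : t ⊆ s := Finset.filter_subset _ _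
      have hxt : x ∉ t := fun h =>
        (Finset.mem_filter.mp h).2.2 (Finset.mem_filter.mp h).2.1
      have htss : t ⊂ s := ⟨htsub, fun hsub => hxt (hsub hx)⟩
      have htne : t.Nonempty := ⟨q, by simp [ht, Finset.mem_filter, hq, hxq, hqx]⟩
      obtain ⟨w, hwt, hwmax⟩ := ih t htss htne
      refine ⟨w, htsub hwt, fun p hp hwp => ?_⟩
      have hw : R x w ∧ ¬ R w x := (Finset.mem_filter.mp hwt).2
      have hpx : ¬ R p x := fun hpx => hw.2 (hT hwp hpx)
      have hpt : p ∈ t := Finset.mem_filter.mpr ⟨hp, hT hw.1 hwp, hpx⟩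
      exact hwmax p hpt hwp

/-- Theorem 2: in absence of splitter transitions of type 1 and of type 2,
`P` is `R`-block-stable. -/
theorem no_splitters_implies_blockStable {Q : Type*} [Fintype Q] (tr R P : Q → Q → Prop)
    (hRrefl : Reflexive R) (hRtrans : Transitive R)
    (hPeq : Equivalence P) (hPR : ∀ a b, P a b → R a b)
    (rep : Q → Q) (hrep1 : ∀ q, P q (rep q)) (hrep2 : ∀ q q', P q q' → rep q = rep q')
    (hNoSplit1 : ∀ e b, tr e b → ∃ b', R b b' ∧ tr (rep e) b')
    (hNoSplit2 : ∀ e b,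
      (∃ b', (R b b' ∧ R b' b) ∧ tr (rep e) b') →
      (∀ q', tr (rep e) q' → R b q' → (R b q' ∧ R q' b)) →
      ∀ e'', P e'' e → ∃ b'', (R b b'' ∧ R b'' b) ∧ tr e'' b'') :
    ∀ b d d', P d d' → ((∃ b', R b b' ∧ tr d b') ↔ (∃ b', R b b' ∧ tr d' b')) := by
  classical
  have key : ∀ b d d', P d d' → (∃ b', R b b' ∧ tr d b') → ∃ b', R b b' ∧ tr d' b' := by
    intro b d d' hdd' ⟨b', hbb', hdb'⟩
    obtain ⟨c, hb'c, hrc⟩ := hNoSplit1 d b' hdb'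
    set s := Finset.univ.filter (fun q => tr (rep d) q ∧ R b q) with hs
    have hcs : c ∈ s := by
      simp [hs, Finset.mem_filter, hrc, hRtrans hbb' hb'c]
    obtain ⟨w, hws, hwmax⟩ := exists_R_maximal R hRtrans s ⟨c, hcs⟩
    have hw : tr (rep d) w ∧ R b w := (Finset.mem_filter.mp hws).2
    obtain ⟨b'', ⟨hwb'', _⟩, htr⟩ :=
      hNoSplit2 d w ⟨w, ⟨hRrefl w, hRrefl w⟩, hw.1⟩
        (fun q' hq' hwq' => ⟨hwq', hwmax q'
          (by simp [hs, Finset.mem_filter, hq', hRtrans hw.2 hwq']) hwq'⟩)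
        d' (hPeq.symm hdd')
    exact ⟨b'', hRtrans hw.2 hwb'', htr⟩
  intro b d d' hdd'
  exact ⟨key b d d' hdd', key b d' d (hPeq.symm hdd')⟩
end

section
/- Let (Q, →) be a transition system, U a preorder on Q, R a U-stable preorder (so R ⊆ U), P an equivalence relation included in R, and rep a representative map for P. Let e, b ∈ Q with e → b and suppose ¬(∃ b', b R b' ∧ rep(e) → b') (the transition from the block of e to B = [b]_R is a splitter transition of type 1). Then NotRel(B) = (U \ R)(B) is nonempty: there exists b' with b U b' and ¬(b R b'). -/
/-- Proposition 6, item 1: a splitter transition of type 1 ending in block `B = [b]_R`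
implies `NotRel(B) = (U \ R)(B)` is nonempty. -/
theorem split1_implies_notRel_nonempty {Q : Type*} (tr U R P : Q → Q → Prop)
    (hUrefl : Reflexive U) (hUtrans : Transitive U)
    (hRrefl : Reflexive R) (hRtrans : Transitive R)
    (hRU : ∀ a b, R a b → U a b)
    (hUstable : ∀ c d b, R c d → tr c b → ∃ b', tr d b' ∧ U b b')
    (hPeq : Equivalence P) (hPR : ∀ a b, P a b → R a b)
    (rep : Q → Q) (hrep1 : ∀ q, P q (rep q)) (hrep2 : ∀ q q', P q q' → rep q = rep q')
    (e b : Q) (heb : tr e b)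
    (hsplitter : ¬ ∃ b', R b b' ∧ tr (rep e) b') :
    ∃ b', U b b' ∧ ¬ R b b' := by
  obtain ⟨b', htr, hU⟩ := hUstable e (rep e) b (hPR _ _ (hrep1 e)) heb
  exact ⟨b', hU, fun hR => hsplitter ⟨b', hR, htr⟩⟩
end

section
/- Let (Q, →) be a finite transition system, U a preorder on Q, R a U-stable preorder (so R ⊆ U), P an equivalence relation included in R, and rep a representative map for P. Assume there is no splitter transition of type 1: for all e', b'' with e' → b'' there exists b₂ with b'' R b₂ and rep(e') → b₂. Let e, b ∈ Q and assume the transition from the block of e to B = [b]_R is a splitter transition of type 2: (a) there exists b' ∈ [b]_R with rep(e) → b'; (b) for every q', if rep(e) → q' and b R q' then q' ∈ [b]_R; (c) there exists e'' with e'' P e and no transition from e'' into [b]_R. Then NotRel(B) = (U \ R)(B) is nonempty: there exists b' with b U b' and ¬(b R b'). -/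
/-- Proposition 6, item 2: in absence of splitter transitions of type 1, a splitter
transition of type 2 ending in block `B = [b]_R` implies `NotRel(B) = (U \ R)(B)` is
nonempty. -/
theorem split2_implies_notRel_nonempty {Q : Type*} [Fintype Q] (tr U R P : Q → Q → Prop)
    (hUrefl : Reflexive U) (hUtrans : Transitive U)
    (hRrefl : Reflexive R) (hRtrans : Transitive R)
    (hRU : ∀ a b, R a b → U a b)
    (hUstable : ∀ c d b, R c d → tr c b → ∃ b', tr d b' ∧ U b b')
    (hPeq : Equivalence P) (hPR : ∀ a b, P a b → R a b)
    (rep : Q → Q) (hrep1 : ∀ q, P q (rep q)) (hrep2 : ∀ q q', P q q' → rep q = rep q')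
    (hNoSplit1 : ∀ e' b'', tr e' b'' → ∃ b₂, R b'' b₂ ∧ tr (rep e') b₂)
    (e b : Q)
    (ha : ∃ b', (R b b' ∧ R b' b) ∧ tr (rep e) b')
    (hb : ∀ q', tr (rep e) q' → R b q' → (R b q' ∧ R q' b))
    (hc : ∃ e'', P e'' e ∧ ¬ ∃ b', (R b b' ∧ R b' b) ∧ tr e'' b') :
    ∃ b', U b b' ∧ ¬ R b b' := by
  obtain ⟨b', ⟨hbb', hb'b⟩, htr⟩ := ha
  obtain ⟨e'', hPe, hno⟩ := hc
  have hPre : P (rep e) e'' := hPeq.symm (hPeq.trans hPe (hrep1 e))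
  obtain ⟨q, htrq, hUq⟩ := hUstable (rep e) e'' b' (hPR _ _ hPre) htr
  refine ⟨q, hUtrans (hRU _ _ hbb') hUq, fun hRbq => ?_⟩
  obtain ⟨b₂, hRqb₂, htrb₂⟩ := hNoSplit1 e'' q htrq
  rw [hrep2 e'' e hPe] at htrb₂
  have hmem := hb b₂ htrb₂ (hRtrans hRbq hRqb₂)
  exact hno ⟨q, ⟨hRbq, hRtrans hRqb₂ hmem.2⟩, htrq⟩
end
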